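/- Let M be a compact connected smooth manifold without boundary, let μ be a finite Borel measure on M that assigns positive measure to every nonempty open set, and let 𝒰 = {U_1,…,U_m} be a finite open cover of M. Then there exists a constant C > 0, depending only on M, μ and 𝒰, such that every smooth function f : M → ℝ with ∫_M f dμ = 0 can be written as f = f_1 + ⋯ + f_m where, for each 1 ≤ i ≤ m, f_i : M → ℝ is smooth, the support of f_i is contained in U_i, ∫_M f_i dμ = 0, and ‖f_i‖_∞ ≤ C‖f‖_∞. -/

import Mathlib

open MeasureTheory
open scoped Manifold

section Aux

variable {d : ℕ} {M : Type*} [TopologicalSpace M]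
  [ChartedSpace (EuclideanSpace ℝ (Fin d)) M] [IsManifold (𝓡 d) (⊤ : ℕ∞) M]
  [CompactSpace M] [T2Space M] [MeasurableSpace M] [BorelSpace M]

/-- Any continuous function on a compact space with a finite measure is integrable. -/
lemma aux_integrable (μ : Measure M) [IsFiniteMeasure μ] {f : M → ℝ} (hf : Continuous f) :
    Integrable f μ :=
  hf.integrable_of_hasCompactSupport (HasCompactSupport.of_compactSpace f)

/-- Bound by the sup of the absolute value, on a nonempty compact space. -/
lemma aux_le_sup [Nonempty M] {f : M → ℝ} (hf : Continuous f) (x : M) :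
    |f x| ≤ ⨆ y, |f y| := by
  have hb : BddAbove (Set.range fun y => |f y|) := by
    have := (isCompact_univ (X := M)).bddAbove_image (hf.abs.continuousOn)
    rwa [Set.image_univ] at this
  exact le_ciSup hb x

lemma aux_sup_nonneg [Nonempty M] {f : M → ℝ} (hf : Continuous f) :
    0 ≤ ⨆ y, |f y| :=
  le_trans (abs_nonneg _) (aux_le_sup hf (Classical.arbitrary M))

/-- A smooth bump with unit integral supported in any nonempty open set. -/
lemma aux_bump (μ : Measure M) [IsFiniteMeasure μ] [μ.IsOpenPosMeasure]
    {V : Set M} (hV : IsOpen V) {c : M} (hc : c ∈ V) :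
    ∃ b : M → ℝ, ContMDiff (𝓡 d) 𝓘(ℝ, ℝ) (⊤ : ℕ∞) b ∧ tsupport b ⊆ V ∧
      (∫ x, b x ∂μ) = 1 := by
  have : NormalSpace M := inferInstance
  obtain ⟨V', hV'open, hcV', hclV'⟩ :=
    normal_exists_closure_subset (isClosed_singleton (x := c)) hV (Set.singleton_subset_iff.2 hc)
  obtain ⟨f, hf0, hf1, hf01⟩ := exists_contMDiffMap_zero_one_of_isClosed (n := (⊤ : ℕ∞)) (𝓡 d)
    (hV'open.isClosed_compl) (isClosed_singleton (x := c))
    (by rw [Set.disjoint_left]; rintro x hx rfl; exact hx (hcV' rfl))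
  have hcont : Continuous (f : M → ℝ) := f.contMDiff.continuous
  have hsupp : tsupport (f : M → ℝ) ⊆ V := by
    refine subset_trans (closure_mono ?_) (le_trans (closure_mono subset_rfl) hclV')
    intro x hx
    by_contra hxV'
    exact hx (hf0 hxV')
  have hint : Integrable (f : M → ℝ) μ := aux_integrable μ hcont
  have hnonneg : 0 ≤ (f : M → ℝ) := fun x => (hf01 x).1
  have hpos : 0 < ∫ x, f x ∂μ := by
    rw [integral_pos_iff_support_of_nonneg hnonneg hint]
    have hopen : IsOpen (Function.support (f : M → ℝ)) := by
      have : Function.support (f : M → ℝ) = (f : M → ℝ) ⁻¹' {0}ᶜ := by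
        ext x; simp [Function.mem_support]
      rw [this]
      exact (isClosed_singleton.preimage hcont).isOpen_compl
    refine hopen.measure_pos μ ⟨c, ?_⟩
    simp [Function.mem_support, hf1 rfl]
  refine ⟨fun x => (∫ x, f x ∂μ)⁻¹ * f x, ?_, ?_, ?_⟩
  · exact (contMDiff_const (c := (∫ x, f x ∂μ)⁻¹)).mul f.contMDiff
  · refine subset_trans (closure_mono ?_) hsupp
    intro x hx
    simp only [Function.mem_support] at hx ⊢
    intro h; exact hx (by simp [h])
  · rw [integral_const_mul, inv_mul_cancel₀ hpos.ne']

/-- Mass transfer along a chain of overlapping open sets. -/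
lemma aux_transfer (μ : Measure M) [IsFiniteMeasure μ] [μ.IsOpenPosMeasure]
    {m : ℕ} (U : Fin m → Set M) (hUopen : ∀ i, IsOpen (U i)) (i j : Fin m)
    (h : Relation.EqvGen (fun a b => (U a ∩ U b).Nonempty) i j) :
    ∃ t : Fin m → M → ℝ, (∀ k, ContMDiff (𝓡 d) 𝓘(ℝ, ℝ) (⊤ : ℕ∞) (t k)) ∧
      (∀ k, tsupport (t k) ⊆ U k) ∧ (∀ x, ∑ k, t k x = 0) ∧
      ∀ k, (∫ x, t k x ∂μ) =
        (if k = j then (1 : ℝ) else 0) - (if k = i then (1 : ℝ) else 0) := by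
  induction h with
  | rel a b hab =>
    obtain ⟨c, hc⟩ := hab
    obtain ⟨β, hβsmooth, hβsupp, hβint⟩ :=
      aux_bump (d := d) μ ((hUopen a).inter (hUopen b)) hc
    classical
    refine ⟨fun k x => ((if k = b then (1 : ℝ) else 0) - (if k = a then 1 else 0)) * β x,
      ?_, ?_, ?_, ?_⟩
    · intro k; exact contMDiff_const.mul hβsmooth
    · intro k
      by_cases hk : ((if k = b then (1 : ℝ) else 0) - (if k = a then 1 else 0)) = 0
      · have h0 : (fun x => ((if k = b then (1 : ℝ) else 0) - (if k = a then 1 else 0)) * β x)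
            = (0 : M → ℝ) := by funext x; rw [hk]; simp
        rw [tsupport_eq_empty_iff.2 h0]
        exact Set.empty_subset _
      · have hsub : tsupport
            (fun x => ((if k = b then (1 : ℝ) else 0) - (if k = a then 1 else 0)) * β x)
            ⊆ tsupport β := by
          refine closure_mono ?_
          intro x hx
          simp only [Function.mem_support] at hx ⊢
          intro h0; exact hx (by rw [h0, mul_zero])
        refine subset_trans hsub ?_
        have hkab : k = a ∨ k = b := by
          by_contra hcon
          push_neg at hcon
          simp [hcon.1, hcon.2] at hk
        rcases hkab with rfl | rfl
        · exact subset_trans hβsupp Set.inter_subset_left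
        · exact subset_trans hβsupp Set.inter_subset_right
    · intro x
      rw [← Finset.sum_mul]
      have : ∑ k, ((if k = b then (1 : ℝ) else 0) - (if k = a then 1 else 0)) = 0 := by
        simp [Finset.sum_sub_distrib]
      rw [this, zero_mul]
    · intro k
      rw [integral_const_mul, hβint, mul_one]
  | refl a =>
    exact ⟨fun _ _ => 0, fun _ => contMDiff_const, fun k => by simp [tsupport],
      fun x => by simp, fun k => by simp⟩
  | symm a b _ ih =>
    obtain ⟨t, hsm, hsp, hz, hint⟩ := ih
    refine ⟨fun k x => -(t k x), fun k => (hsm k).neg, ?_, ?_, ?_⟩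
    · intro k
      refine subset_trans (closure_mono ?_) (hsp k)
      intro x hx; simp only [Function.mem_support] at hx ⊢
      intro h0; exact hx (by rw [h0, neg_zero])
    · intro x; simp [Finset.sum_neg_distrib, hz x]
    · intro k
      rw [integral_neg, hint k]; ring
  | trans a b c _ _ ih₁ ih₂ =>
    obtain ⟨t, hsm, hsp, hz, hint⟩ := ih₁
    obtain ⟨t', hsm', hsp', hz', hint'⟩ := ih₂
    refine ⟨fun k x => t k x + t' k x, fun k => (hsm k).add (hsm' k), ?_, ?_, ?_⟩
    · intro k
      have : Function.support (fun x => t k x + t' k x)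
          ⊆ tsupport (t k) ∪ tsupport (t' k) := by
        intro x hx
        simp only [Function.mem_support] at hx
        by_contra hcon
        simp only [Set.mem_union, not_or] at hcon
        have h1 : t k x = 0 :=
          Function.notMem_support.1 fun hs => hcon.1 (subset_closure hs)
        have h2 : t' k x = 0 :=
          Function.notMem_support.1 fun hs => hcon.2 (subset_closure hs)
        exact hx (by rw [h1, h2, add_zero])
      refine subset_trans (closure_minimal this
        ((isClosed_closure).union isClosed_closure)) ?_
      exact Set.union_subset (hsp k) (hsp' k)
    · intro x; rw [Finset.sum_add_distrib, hz x, hz' x, add_zero]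
    · intro k
      rw [integral_add (aux_integrable μ (hsm k).continuous)
        (aux_integrable μ (hsm' k).continuous), hint k, hint' k]
      ring

/-- Connectivity of the nerve of an open cover of a connected space. -/
lemma aux_conn [ConnectedSpace M] {m : ℕ} (U : Fin m → Set M)
    (hUopen : ∀ i, IsOpen (U i)) (hUcover : (⋃ i, U i) = Set.univ)
    (i j : Fin m) (hi : (U i).Nonempty) (hj : (U j).Nonempty) :
    Relation.EqvGen (fun a b => (U a ∩ U b).Nonempty) i j := by
  set r := fun a b : Fin m => (U a ∩ U b).Nonempty with hr
  set S : Set M := ⋃ k ∈ {k | Relation.EqvGen r i k}, U k with hS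
  have hSopen : IsOpen S := isOpen_biUnion fun k _ => hUopen k
  set T : Set M := ⋃ k ∈ {k | ¬ Relation.EqvGen r i k}, U k with hT
  have hTopen : IsOpen T := isOpen_biUnion fun k _ => hUopen k
  have hdisj : S ∩ T = ∅ := by
    by_contra hcon
    obtain ⟨x, hxS, hxT⟩ := Set.nonempty_iff_ne_empty.2 hcon
    obtain ⟨l, hl, hxl⟩ := Set.mem_iUnion₂.1 hxS
    obtain ⟨k, hk, hxk⟩ := Set.mem_iUnion₂.1 hxT
    exact hk (Relation.EqvGen.trans _ _ _ hl (Relation.EqvGen.rel _ _ ⟨x, hxl, hxk⟩))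
  have hcoverST : S ∪ T = Set.univ := by
    apply Set.eq_univ_of_univ_subset
    intro x _
    have : x ∈ ⋃ k, U k := by rw [hUcover]; trivial
    obtain ⟨k, hxk⟩ := Set.mem_iUnion.1 this
    by_cases hk : Relation.EqvGen r i k
    · exact Or.inl (Set.mem_iUnion₂.2 ⟨k, hk, hxk⟩)
    · exact Or.inr (Set.mem_iUnion₂.2 ⟨k, hk, hxk⟩)
  have hSclosed : IsClosed S := by
    have : Sᶜ = T := by
      apply Set.eq_of_subset_of_subset
      · intro x hx
        have : x ∈ S ∪ T := hcoverST ▸ Set.mem_univ x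
        rcases this with h | h
        · exact absurd h hx
        · exact h
      · intro x hx hxS
        have hne : (S ∩ T).Nonempty := ⟨x, hxS, hx⟩
        rw [hdisj] at hne
        exact Set.not_nonempty_empty hne
    rw [← isOpen_compl_iff, this]
    exact hTopen
  have hSnonempty : S.Nonempty := by
    obtain ⟨x, hx⟩ := hi
    exact ⟨x, Set.mem_iUnion₂.2 ⟨i, Relation.EqvGen.refl i, hx⟩⟩
  have hSuniv : S = Set.univ :=
    IsClopen.eq_univ ⟨hSclosed, hSopen⟩ hSnonempty
  obtain ⟨y, hy⟩ := hj
  have : y ∈ S := hSuniv ▸ Set.mem_univ y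
  obtain ⟨k, hk, hyk⟩ := Set.mem_iUnion₂.1 this
  exact Relation.EqvGen.trans _ _ _ hk (Relation.EqvGen.rel _ _ ⟨y, hyk, hy⟩)

end Aux

/-- Localization: any zero-mean smooth function on a compact connected manifold can be
written as a sum of zero-mean smooth functions subordinate to a given finite open cover,
with uniform-norm control of the summands. -/
theorem stmt_9 (d : ℕ) (M : Type*) [TopologicalSpace M]
    [ChartedSpace (EuclideanSpace ℝ (Fin d)) M] [IsManifold (𝓡 d) (⊤ : ℕ∞) M]
    [CompactSpace M] [ConnectedSpace M] [T2Space M]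
    [MeasurableSpace M] [BorelSpace M]
    (μ : Measure M) [IsFiniteMeasure μ] [μ.IsOpenPosMeasure]
    (m : ℕ) (U : Fin m → Set M) (hUopen : ∀ i, IsOpen (U i))
    (hUcover : (⋃ i, U i) = Set.univ) :
    ∃ C : ℝ, 0 < C ∧
      ∀ f : M → ℝ, ContMDiff (𝓡 d) 𝓘(ℝ, ℝ) (⊤ : ℕ∞) f → (∫ x, f x ∂μ) = 0 →
        ∃ g : Fin m → M → ℝ,
          (∀ x, f x = ∑ i, g i x) ∧
          (∀ i, ContMDiff (𝓡 d) 𝓘(ℝ, ℝ) (⊤ : ℕ∞) (g i)) ∧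
          (∀ i, tsupport (g i) ⊆ U i) ∧
          (∀ i, (∫ x, g i x ∂μ) = 0) ∧
          (∀ i x, |g i x| ≤ C * ⨆ y, |f y|) := by
  classical
  rcases isEmpty_or_nonempty M with hM | hM
  · refine ⟨1, one_pos, fun f hf hint => ⟨fun _ _ => 0, ?_, ?_, ?_, ?_, ?_⟩⟩
    · intro x; exact (IsEmpty.false x).elim
    · intro i; exact contMDiff_const
    · intro i
      show tsupport (fun _ : M => (0 : ℝ)) ⊆ U i
      rw [(tsupport_eq_empty_iff (f := fun _ : M => (0 : ℝ))).2 rfl]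
      exact Set.empty_subset _
    · intro i; simp
    · intro i x; exact (IsEmpty.false x).elim
  -- Nonempty case
  obtain ⟨p, hp⟩ := SmoothPartitionOfUnity.exists_isSubordinate (𝓡 d) isClosed_univ U hUopen
    (by rw [hUcover])
  obtain ⟨x₀⟩ := hM
  have hx₀ : x₀ ∈ ⋃ i, U i := by rw [hUcover]; trivial
  obtain ⟨i₀, hi₀⟩ := Set.mem_iUnion.1 hx₀
  have htr : ∀ j : Fin m, ∃ t : Fin m → M → ℝ,
      (∀ k, ContMDiff (𝓡 d) 𝓘(ℝ, ℝ) (⊤ : ℕ∞) (t k)) ∧ (∀ k, tsupport (t k) ⊆ U k) ∧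
      (∀ x, ∑ k, t k x = 0) ∧
      ((U j).Nonempty → ∀ k, (∫ x, t k x ∂μ) =
        (if k = j then (1 : ℝ) else 0) - (if k = i₀ then 1 else 0)) := by
    intro j
    by_cases hj : (U j).Nonempty
    · obtain ⟨t, h1, h2, h3, h4⟩ := aux_transfer (d := d) μ U hUopen i₀ j
        (aux_conn U hUopen hUcover i₀ j ⟨x₀, hi₀⟩ hj)
      exact ⟨t, h1, h2, h3, fun _ => h4⟩
    · refine ⟨fun _ _ => 0, fun _ => contMDiff_const, ?_, fun x => by simp, fun h => absurd h hj⟩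
      intro k
      show tsupport (fun _ : M => (0 : ℝ)) ⊆ U k
      rw [(tsupport_eq_empty_iff (f := fun _ : M => (0 : ℝ))).2 rfl]
      exact Set.empty_subset _
  choose t htsm htsp htz hti using htr
  set μT : ℝ := (μ Set.univ).toReal with hμTdef
  have hμT : 0 ≤ μT := ENNReal.toReal_nonneg
  set Tb : Fin m → Fin m → ℝ := fun j k => ⨆ x, |t j k x| with hTbdef
  have hTb_nonneg : ∀ j k, 0 ≤ Tb j k := fun j k => aux_sup_nonneg ((htsm j k).continuous)
  have hTb_le : ∀ j k x, |t j k x| ≤ Tb j k := fun j k => aux_le_sup ((htsm j k).continuous)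
  set SS : ℝ := ∑ j, ∑ k, Tb j k with hSSdef
  have hSS : 0 ≤ SS :=
    Finset.sum_nonneg fun j _ => Finset.sum_nonneg fun k _ => hTb_nonneg j k
  refine ⟨1 + μT * SS, by nlinarith, fun f hf hint0 => ?_⟩
  set a : Fin m → ℝ := fun j => ∫ x, p j x * f x ∂μ with hadef
  have hfc : Continuous f := hf.continuous
  have hpc : ∀ j, Continuous (p j : M → ℝ) := fun j => (p j).contMDiff.continuous
  have hint_pf : ∀ j, Integrable (fun x => p j x * f x) μ :=
    fun j => aux_integrable μ ((hpc j).mul hfc)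
  have hone : ∀ x : M, ∑ j, p j x = 1 := by
    intro x
    have := p.sum_eq_one (Set.mem_univ x)
    rwa [finsum_eq_sum_of_fintype] at this
  have hsum_a : ∑ j, a j = 0 := by
    rw [← integral_finset_sum _ (fun j _ => hint_pf j), ← hint0]
    congr 1; funext x
    rw [← Finset.sum_mul, hone x, one_mul]
  set g : Fin m → M → ℝ := fun i x => p i x * f x - ∑ j, a j * t j i x with hgdef
  have hF0 : 0 ≤ ⨆ y, |f y| := aux_sup_nonneg hfc
  have hfx : ∀ y, |f y| ≤ ⨆ y, |f y| := aux_le_sup hfc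
  have hpf_le : ∀ j x, |p j x * f x| ≤ ⨆ y, |f y| := by
    intro j x
    rw [abs_mul]
    calc |p j x| * |f x| ≤ 1 * (⨆ y, |f y|) :=
          mul_le_mul (by rw [abs_of_nonneg (p.nonneg j x)]; exact p.le_one j x)
            (hfx x) (abs_nonneg _) one_pos.le
      _ = ⨆ y, |f y| := one_mul _
  refine ⟨g, ?_, ?_, ?_, ?_, ?_⟩
  · -- sum identity
    intro x
    have h1 : ∑ i, g i x
        = (∑ i, p i x * f x) - ∑ i, ∑ j, a j * t j i x := by
      rw [hgdef]; exact Finset.sum_sub_distrib ..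
    have h2 : ∑ i, ∑ j, a j * t j i x = 0 := by
      rw [Finset.sum_comm]
      refine Finset.sum_eq_zero fun j _ => ?_
      rw [← Finset.mul_sum, htz j x, mul_zero]
    rw [h1, h2, sub_zero, ← Finset.sum_mul, hone x, one_mul]
  · -- smoothness
    intro i
    refine (((p i).contMDiff).mul hf).sub ?_
    exact contMDiff_finset_sum fun j _ => contMDiff_const.mul (htsm j i)
  · -- support
    intro i
    have hA : IsClosed (tsupport (p i : M → ℝ) ∪ ⋃ j, tsupport (t j i)) :=
      (isClosed_tsupport _).union (isClosed_iUnion_of_finite fun j => isClosed_tsupport _)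
    have hsub : Function.support (g i) ⊆ tsupport (p i : M → ℝ) ∪ ⋃ j, tsupport (t j i) := by
      intro x hx
      by_contra hcon
      simp only [Set.mem_union, Set.mem_iUnion, not_or, not_exists] at hcon
      have h1 : p i x = 0 :=
        Function.notMem_support.1 fun hs => hcon.1 (subset_closure hs)
      have h2 : ∀ j, t j i x = 0 :=
        fun j => Function.notMem_support.1 fun hs => hcon.2 j (subset_closure hs)
      refine hx ?_
      simp only [hgdef, h1, zero_mul, zero_sub, neg_eq_zero]
      exact Finset.sum_eq_zero fun j _ => by rw [h2 j, mul_zero]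
    refine subset_trans (closure_minimal hsub hA) ?_
    exact Set.union_subset (hp i) (Set.iUnion_subset fun j => htsp j i)
  · -- zero integral
    intro i
    have hti_int : ∀ j, Integrable (fun x => a j * t j i x) μ :=
      fun j => (aux_integrable μ ((htsm j i).continuous)).const_mul _
    have : (∫ x, g i x ∂μ)
        = a i - ∑ j, ∫ x, a j * t j i x ∂μ := by
      rw [hgdef]
      rw [integral_sub (hint_pf i) (integrable_finset_sum _ (fun j _ => hti_int j)),
        integral_finset_sum _ (fun j _ => hti_int j)]
    rw [this]
    have hterm : ∀ j, (∫ x, a j * t j i x ∂μ)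
        = (if i = j then a j else 0) - (if i = i₀ then (1 : ℝ) else 0) * a j := by
      intro j
      rw [integral_const_mul]
      by_cases hj : (U j).Nonempty
      · rw [hti j hj i, mul_sub]
        congr 1
        · by_cases h : i = j <;> simp [h]
        · by_cases h' : i = i₀ <;> simp [h']
      · have haj : a j = 0 := by
          have hpj : ∀ x, p j x = 0 := by
            intro x
            by_contra hne
            have hmem : x ∈ tsupport (p j : M → ℝ) :=
              subset_closure (Function.mem_support.2 hne)
            have := hp j hmem
            rw [Set.not_nonempty_iff_eq_empty.1 hj] at this
            exact this
          simp only [hadef]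
          have : (fun x => p j x * f x) = fun _ => (0 : ℝ) := by
            funext x; rw [hpj x, zero_mul]
          rw [this, integral_zero]
        simp [haj]
    rw [Finset.sum_congr rfl (fun j _ => hterm j), Finset.sum_sub_distrib,
      Finset.sum_ite_eq, ← Finset.mul_sum, hsum_a, mul_zero, sub_zero]
    simp
  · -- bound
    intro i x
    have ha : ∀ j, |a j| ≤ μT * ⨆ y, |f y| := by
      intro j
      have h1 : |a j| ≤ ∫ x, |p j x * f x| ∂μ := by
        have := norm_integral_le_integral_norm (μ := μ) (f := fun x => p j x * f x)
        simpa only [Real.norm_eq_abs] using this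
      refine le_trans h1 ?_
      have h2 : (∫ x, |p j x * f x| ∂μ) ≤ ∫ _, (⨆ y, |f y|) ∂μ :=
        integral_mono (hint_pf j).abs (integrable_const _) (fun x => hpf_le j x)
      refine le_trans h2 ?_
      rw [integral_const, smul_eq_mul, measureReal_def]
    have h2 : |∑ j, a j * t j i x| ≤ μT * (⨆ y, |f y|) * SS := by
      calc |∑ j, a j * t j i x| ≤ ∑ j, |a j * t j i x| := Finset.abs_sum_le_sum_abs _ _
        _ ≤ ∑ j, (μT * ⨆ y, |f y|) * Tb j i := by
            refine Finset.sum_le_sum fun j _ => ?_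
            rw [abs_mul]
            exact mul_le_mul (ha j) (hTb_le j i x) (abs_nonneg _)
              (mul_nonneg hμT hF0)
        _ = (μT * ⨆ y, |f y|) * ∑ j, Tb j i := by rw [← Finset.mul_sum]
        _ ≤ (μT * ⨆ y, |f y|) * SS := by
            refine mul_le_mul_of_nonneg_left ?_ (mul_nonneg hμT hF0)
            refine Finset.sum_le_sum fun j _ => ?_
            exact Finset.single_le_sum (fun k _ => hTb_nonneg j k) (Finset.mem_univ i)
    calc |g i x| = |p i x * f x + -(∑ j, a j * t j i x)| := by rw [hgdef]; ring_nf
      _ ≤ |p i x * f x| + |-(∑ j, a j * t j i x)| := abs_add_le _ _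
      _ = |p i x * f x| + |∑ j, a j * t j i x| := by rw [abs_neg]
      _ ≤ (⨆ y, |f y|) + μT * (⨆ y, |f y|) * SS := add_le_add (hpf_le i x) h2
      _ = (1 + μT * SS) * ⨆ y, |f y| := by ring
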